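/- Let ρ and σ be faithful states on a finite-dimensional complex Hilbert space H. Then for any θ, v ∈ ℝ: (e^{−θ}/(1+e^{v−θ}))·μ_{σ|ρ}([−v, ∞)) ≤ inf{Tr[σ(I−T)] + e^{−θ}·Tr[ρ T] : 0 ≤ T ≤ I}, where μ_{σ|ρ}([−v, ∞)) = Σ Tr[P_μ(σ) ρ^{1/2} P_λ(ρ) ρ^{1/2}], the sum running over eigenvalues λ of ρ and μ of σ with log μ − log λ ≥ −v. -/

import Mathlib

open Matrix MeasureTheory
open scoped ComplexOrder

noncomputable section

namespace QHT

variable {ι : Type*} [Fintype ι] [DecidableEq ι]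

/- Functional calculus for (Hermitian) matrices, via the spectral theorem.
Junk value `0` if the matrix is not Hermitian. -/
noncomputable def matFun (f : ℝ → ℝ) (A : Matrix ι ι ℂ) : Matrix ι ι ℂ :=
  if hA : A.IsHermitian then
    (hA.eigenvectorUnitary : Matrix ι ι ℂ) *
      Matrix.diagonal (fun i => (f (hA.eigenvalues i) : ℂ)) *
      star (hA.eigenvectorUnitary : Matrix ι ι ℂ)
  else 0

/-- Matrix logarithm (of a Hermitian matrix). -/
noncomputable def matLog (A : Matrix ι ι ℂ) : Matrix ι ι ℂ := matFun Real.log A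

/-- Matrix square root (of a Hermitian matrix). -/
noncomputable def matSqrt (A : Matrix ι ι ℂ) : Matrix ι ι ℂ := matFun Real.sqrt A

/-- Quantum relative entropy `D(ρ‖σ) = Tr[ρ (log ρ - log σ)]`. -/
noncomputable def relEntropy (ρ σ : Matrix ι ι ℂ) : ℝ :=
  ((ρ * (matLog ρ - matLog σ)).trace).re

/-- Quantum information variance `V(ρ‖σ) = Tr[ρ (log ρ - log σ)²] - D(ρ‖σ)²`. -/
noncomputable def relVar (ρ σ : Matrix ι ι ℂ) : ℝ :=
  ((ρ * ((matLog ρ - matLog σ) * (matLog ρ - matLog σ))).trace).re - (relEntropy ρ σ) ^ 2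

/-- A state: positive semidefinite with trace one. -/
def IsState (ρ : Matrix ι ι ℂ) : Prop := ρ.PosSemidef ∧ ρ.trace = 1

/-- A faithful state: positive definite with trace one. -/
def IsFaithfulState (ρ : Matrix ι ι ℂ) : Prop := ρ.PosDef ∧ ρ.trace = 1

/-- A test: an operator `T` with `0 ≤ T ≤ I`. -/
def IsTest (T : Matrix ι ι ℂ) : Prop := T.PosSemidef ∧ (1 - T).PosSemidef

/-- Type I error `α(T) = Tr[(I - T) ρ]`. -/
noncomputable def typeI (ρ T : Matrix ι ι ℂ) : ℝ := ((ρ * (1 - T)).trace).re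

/-- Type II error `β(T) = Tr[T σ]`. -/
noncomputable def typeII (σ T : Matrix ι ι ℂ) : ℝ := ((σ * T).trace).re

/-- Optimal type II (Stein) error under the constraint `α(T) ≤ ε`. -/
noncomputable def steinErr (ρ σ : Matrix ι ι ℂ) (ε : ℝ) : ℝ :=
  sInf {b : ℝ | ∃ T : Matrix ι ι ℂ, IsTest T ∧ typeI ρ T ≤ ε ∧ typeII σ T = b}

/-- The ε-hypothesis testing relative entropy. -/
noncomputable def DH (ρ σ : Matrix ι ι ℂ) (ε : ℝ) : ℝ := - Real.log (steinErr ρ σ ε)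

/- `‖log Δ_{σ|ρ} + D(ρ‖σ) id‖`, i.e. the maximum of
`|log μ - log λ + D(ρ‖σ)|` over eigenvalues `λ` of `ρ` and `μ` of `σ`. -/
open Classical in
noncomputable def shiftNorm (ρ σ : Matrix ι ι ℂ) : ℝ :=
  if h : ρ.IsHermitian ∧ σ.IsHermitian then
    ⨆ i : ι, ⨆ j : ι,
      |Real.log (h.2.eigenvalues j) - Real.log (h.1.eigenvalues i) + relEntropy ρ σ|
  else 0

/- Largest eigenvalue of a Hermitian matrix. -/
open Classical in
noncomputable def lamMax (A : Matrix ι ι ℂ) : ℝ :=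
  if hA : A.IsHermitian then ⨆ i : ι, hA.eigenvalues i else 0

/- Smallest eigenvalue of a Hermitian matrix. -/
open Classical in
noncomputable def lamMin (A : Matrix ι ι ℂ) : ℝ :=
  if hA : A.IsHermitian then ⨅ i : ι, hA.eigenvalues i else 0

/- The Loewner order: `A ≤ B` iff `B - A` is positive semidefinite. -/
def loewnerLE {κ : Type*} [Fintype κ] (A B : Matrix κ κ ℂ) : Prop := (B - A).PosSemidef

/-- Splitting off the last tensor factor: `(Fin (n+1) → X) ≃ (Fin n → X) × X`. -/
def splitLast (X : Type*) (n : ℕ) : (Fin (n + 1) → X) ≃ (Fin n → X) × X where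
  toFun f := (fun i => f i.castSucc, f (Fin.last n))
  invFun p := Fin.snoc p.1 p.2
  left_inv f := by
    funext i
    induction i using Fin.lastCases with
    | last => simp
    | cast i => simp
  right_inv p := by
    refine Prod.ext ?_ ?_
    · funext i; simp
    · simp

/-- The tensor product `A ⊗ B` of a state on `H^{⊗(n+1)}` with a state on `H`, viewed as a
state on `H^{⊗(n+2)}`. -/
noncomputable def tensorExt {d n : ℕ}
    (A : Matrix (Fin (n + 1) → Fin d) (Fin (n + 1) → Fin d) ℂ)
    (B : Matrix (Fin d) (Fin d) ℂ) :
    Matrix (Fin (n + 2) → Fin d) (Fin (n + 2) → Fin d) ℂ :=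
  Matrix.reindex (splitLast (Fin d) (n + 1)).symm (splitLast (Fin d) (n + 1)).symm
    (Matrix.kroneckerMap (· * ·) A B)

/-- The canonical identification `H^{⊗1} ≅ H` applied to a matrix. -/
noncomputable def asOne {d : ℕ} (A : Matrix (Fin 1 → Fin d) (Fin 1 → Fin d) ℂ) :
    Matrix (Fin d) (Fin d) ℂ :=
  Matrix.reindex (Equiv.funUnique (Fin 1) (Fin d)) (Equiv.funUnique (Fin 1) (Fin d)) A

/-- The canonical identification `H ≅ H^{⊗1}` applied to a matrix. -/
noncomputable def toOne {d : ℕ} (A : Matrix (Fin d) (Fin d) ℂ) :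
    Matrix (Fin 1 → Fin d) (Fin 1 → Fin d) ℂ :=
  Matrix.reindex (Equiv.funUnique (Fin 1) (Fin d)).symm (Equiv.funUnique (Fin 1) (Fin d)).symm A

/-- Tensor product `A 0 ⊗ A 1 ⊗ ⋯ ⊗ A (n-1)` of a family of matrices. -/
noncomputable def tensorFamily {dm : ℕ → ℕ} (n : ℕ)
    (A : (k : ℕ) → Matrix (Fin (dm k)) (Fin (dm k)) ℂ) :
    Matrix ((k : Fin n) → Fin (dm k)) ((k : Fin n) → Fin (dm k)) ℂ :=
  Matrix.of fun a b => ∏ k : Fin n, A k.1 (a k) (b k)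

/-- Rank-one spectral projection onto the `i`-th eigenvector of a Hermitian matrix. -/
noncomputable def eigProj {A : Matrix ι ι ℂ} (hA : A.IsHermitian) (i : ι) : Matrix ι ι ℂ :=
  Matrix.of fun a b =>
    (hA.eigenvectorUnitary : Matrix ι ι ℂ) a i * star ((hA.eigenvectorUnitary : Matrix ι ι ℂ) b i)

/- The mass `μ_{σ|ρ}(S)` of a set `S ⊆ ℝ` under the spectral measure of
`log Δ_{σ|ρ}` w.r.t. `Ω_ρ = ρ^{1/2}`:
`Σ Tr[P_μ(σ) ρ^{1/2} P_λ(ρ) ρ^{1/2}]` over eigenvalue pairs with `log μ - log λ ∈ S`. -/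
open Classical in
noncomputable def specMassSet (ρ σ : Matrix ι ι ℂ) (S : Set ℝ) : ℝ :=
  if h : ρ.IsHermitian ∧ σ.IsHermitian then
    ∑ i : ι, ∑ j : ι,
      if Real.log (h.2.eigenvalues j) - Real.log (h.1.eigenvalues i) ∈ S then
        ((eigProj h.2 j * matSqrt ρ * eigProj h.1 i * matSqrt ρ).trace).re
      else 0
  else 0

/- The spectral measure `μ_{σ|ρ}` of `log Δ_{σ|ρ}` with respect to `Ω_ρ = ρ^{1/2}`,
as a measure on `ℝ`. -/
open Classical in
noncomputable def specMeasure (ρ σ : Matrix ι ι ℂ) : Measure ℝ :=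
  if h : ρ.IsHermitian ∧ σ.IsHermitian then
    ∑ i : ι, ∑ j : ι,
      (ENNReal.ofReal (((eigProj h.2 j * matSqrt ρ * eigProj h.1 i * matSqrt ρ).trace).re)) •
        Measure.dirac (Real.log (h.2.eigenvalues j) - Real.log (h.1.eigenvalues i))
  else 0

/-- Binary relative entropy. -/
noncomputable def Dbin (p q : ℝ) : ℝ :=
  p * Real.log (p / q) + (1 - p) * Real.log ((1 - p) / (1 - q))

section Channels

variable {ι : Type*} [Fintype ι] [DecidableEq ι]
variable {X : Type*} [Fintype X] [DecidableEq X]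

/-- A POVM with `M` outcomes. -/
def IsPOVM {M : ℕ} (T : Fin M → Matrix ι ι ℂ) : Prop :=
  (∀ k, (T k).PosSemidef) ∧ ∑ k, T k = 1

/-- Average success probability of a code for a classical-quantum channel. -/
noncomputable def avgSuccess {M : ℕ} (W : X → Matrix ι ι ℂ)
    (x : Fin M → X) (T : Fin M → Matrix ι ι ℂ) : ℝ :=
  (1 / M : ℝ) * ∑ k, ((W (x k) * T k).trace).re

/-- Existence of a code of size `M` with average error at most `ε`. -/
def IsCode (W : X → Matrix ι ι ℂ) (M : ℕ) (ε : ℝ) : Prop :=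
  ∃ (x : Fin M → X) (T : Fin M → Matrix ι ι ℂ), IsPOVM T ∧ 1 - ε ≤ avgSuccess W x T

/-- One-shot ε-error capacity `C(W, ε) = log M*(W, ε)`. -/
noncomputable def capacity (W : X → Matrix ι ι ℂ) (ε : ℝ) : ℝ :=
  Real.log ((sSup {M : ℕ | IsCode W M ε} : ℕ) : ℝ)

/-- The average output state `W(p) = Σ_x p(x) W(x)`. -/
noncomputable def mix (W : X → Matrix ι ι ℂ) (p : X → ℝ) : Matrix ι ι ℂ :=
  ∑ x, (p x : ℂ) • W x

/-- The Holevo capacity `χ*(W) = sup_p Σ_x p(x) D(W(x)‖W(p))`. -/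
noncomputable def holevoCap (W : X → Matrix ι ι ℂ) : ℝ :=
  sSup {v : ℝ | ∃ p : X → ℝ, (∀ x, 0 ≤ p x) ∧ ∑ x, p x = 1 ∧
    v = ∑ x, p x * relEntropy (W x) (mix W p)}

/-- A probability mass function achieving the Holevo capacity. -/
def IsMaximizer (W : X → Matrix ι ι ℂ) (p : X → ℝ) : Prop :=
  (∀ x, 0 ≤ p x) ∧ ∑ x, p x = 1 ∧
    ∑ x, p x * relEntropy (W x) (mix W p) = holevoCap W

/-- The lifted state `ρ_p = Σ_x p(x) |x⟩⟨x| ⊗ W(x)`. -/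
noncomputable def liftRho (W : X → Matrix ι ι ℂ) (p : X → ℝ) : Matrix (X × ι) (X × ι) ℂ :=
  Matrix.of fun a b => if a.1 = b.1 then (p a.1 : ℂ) * W a.1 a.2 b.2 else 0

/-- The lifted state `σ_p = Σ_x p(x) |x⟩⟨x| ⊗ W(p)`. -/
noncomputable def liftSigma (W : X → Matrix ι ι ℂ) (p : X → ℝ) : Matrix (X × ι) (X × ι) ℂ :=
  Matrix.of fun a b => if a.1 = b.1 then (p a.1 : ℂ) * (mix W p) a.2 b.2 else 0

/-- The memoryless product channel `W^{⊗n}`. -/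
noncomputable def prodChannel {d : ℕ} (W : X → Matrix (Fin d) (Fin d) ℂ) (n : ℕ) :
    (Fin n → X) → Matrix (Fin n → Fin d) (Fin n → Fin d) ℂ :=
  fun x => Matrix.of fun a b => ∏ k, W (x k) (a k) (b k)

/-- The single-letter channel `W_1 : X → D(H)` underlying a channel family with memory. -/
noncomputable def chan1 {d : ℕ}
    (W : (n : ℕ) → (Fin (n + 1) → X) → Matrix (Fin (n + 1) → Fin d) (Fin (n + 1) → Fin d) ℂ) :
    X → Matrix (Fin d) (Fin d) ℂ :=
  fun x => asOne (W 0 (fun _ => x))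

end Channels

section CPmaps

/-- Amplification `id_F ⊗ Ψ` of a map `Ψ` on matrix algebras, acting blockwise. -/
noncomputable def ampl {F I J : Type*} [Fintype F] [Fintype I] [Fintype J]
    (Ψ : Matrix I I ℂ → Matrix J J ℂ) (M : Matrix (F × I) (F × I) ℂ) :
    Matrix (F × J) (F × J) ℂ :=
  Matrix.of fun p q => Ψ (Matrix.of fun a b => M (p.1, a) (q.1, b)) p.2 q.2

/-- Complete positivity of a map between matrix algebras. -/
def IsCP {I J : Type*} [Fintype I] [Fintype J]
    (Ψ : Matrix I I ℂ → Matrix J J ℂ) : Prop :=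
  ∀ (m : ℕ) (M : Matrix (Fin m × I) (Fin m × I) ℂ), M.PosSemidef → (ampl Ψ M).PosSemidef

/-- Trace preservation of a map between matrix algebras. -/
def IsTP {I J : Type*} [Fintype I] [Fintype J]
    (Ψ : Matrix I I ℂ → Matrix J J ℂ) : Prop :=
  ∀ x, (Ψ x).trace = x.trace

/-- Partial trace over the second tensor factor. -/
noncomputable def ptraceSnd {I K : Type*} [Fintype K] (M : Matrix (I × K) (I × K) ℂ) :
    Matrix I I ℂ :=
  Matrix.of fun a b => ∑ k, M (a, k) (b, k)

/-- Partial trace over the first tensor factor. -/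
noncomputable def ptraceFst {I K : Type*} [Fintype I] (M : Matrix (I × K) (I × K) ℂ) :
    Matrix K K ℂ :=
  Matrix.of fun i j => ∑ a, M (a, i) (a, j)

/-- Reindexing `A ⊗ K ≅ A^{⊗1} ⊗ K`. -/
def tauEquiv0 (dA dK : ℕ) : (Fin dA × Fin dK) ≃ ((Fin 1 → Fin dA) × Fin dK) :=
  Equiv.prodCongr (Equiv.funUnique (Fin 1) (Fin dA)).symm (Equiv.refl (Fin dK))

/-- Reindexing `A^{⊗(n+1)} ⊗ (A ⊗ K) ≅ A^{⊗(n+2)} ⊗ K`. -/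
def tauEquivS (dA dK n : ℕ) :
    ((Fin (n + 1) → Fin dA) × (Fin dA × Fin dK)) ≃ ((Fin (n + 2) → Fin dA) × Fin dK) :=
  (Equiv.prodAssoc (Fin (n + 1) → Fin dA) (Fin dA) (Fin dK)).symm.trans
    (Equiv.prodCongr (splitLast (Fin dA) (n + 1)).symm (Equiv.refl (Fin dK)))

/-- The states `τ_n` generated by a family of CPTP maps `E_n` and an initial state `ρ`:
`τ_1 = E_{1*}(ρ)`, `τ_{n+1} = (id^{⊗n} ⊗ E_{(n+1)*})(τ_n)` (here `fcsTau E ρ n` is `τ_{n+1}`). -/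
noncomputable def fcsTau {dA dK : ℕ}
    (E : ℕ → Matrix (Fin dK) (Fin dK) ℂ →ₗ[ℂ] Matrix (Fin dA × Fin dK) (Fin dA × Fin dK) ℂ)
    (ρ : Matrix (Fin dK) (Fin dK) ℂ) :
    (n : ℕ) → Matrix ((Fin (n + 1) → Fin dA) × Fin dK) ((Fin (n + 1) → Fin dA) × Fin dK) ℂ
  | 0 => Matrix.reindex (tauEquiv0 dA dK) (tauEquiv0 dA dK) (E 0 ρ)
  | n + 1 => Matrix.reindex (tauEquivS dA dK n) (tauEquivS dA dK n)
      (ampl (E (n + 1)) (fcsTau E ρ n))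

end CPmaps


section AuxJOPS

variable {ι : Type*} [Fintype ι] [DecidableEq ι]

/-- Weighted Cauchy-Schwarz scalar inequality. -/
lemma scalar_key (θ v lam mu x y : ℝ) (hx : 0 ≤ x) (hy : 0 ≤ y) (hlam : 0 ≤ lam)
    (hmu : 0 ≤ mu) (hle : lam ≤ Real.exp v * mu) :
    Real.exp (-θ) / (1 + Real.exp (v - θ)) * (lam * (x + y) ^ 2) ≤
      mu * x ^ 2 + Real.exp (-θ) * (lam * y ^ 2) := by
  set κ := Real.exp (-θ) / (1 + Real.exp (v - θ)) with hκdef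
  set t := Real.exp (θ - v) with htdef
  have ht0 : 0 < t := Real.exp_pos _
  have hden : (0:ℝ) < 1 + Real.exp (v - θ) := by positivity
  have hκ0 : 0 ≤ κ := by positivity
  have hinv : 1 / t = Real.exp (v - θ) := by
    rw [htdef, one_div, ← Real.exp_neg]; ring_nf
  have h2 : κ * (1 + 1 / t) = Real.exp (-θ) := by
    rw [hinv, hκdef, div_mul_cancel₀ _ hden.ne']
  have h1 : κ * (1 + t) * Real.exp v = 1 := by
    have he : Real.exp (-θ) * (1 + t) * Real.exp v = 1 + Real.exp (v - θ) := by
      rw [htdef, mul_add, mul_one, add_mul, ← Real.exp_add, ← Real.exp_add, ← Real.exp_add]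
      ring_nf
      rw [Real.exp_zero]
      ring
    rw [hκdef]
    field_simp
    linarith [he]
  have hcs : (x + y) ^ 2 ≤ (1 + t) * x ^ 2 + (1 + 1 / t) * y ^ 2 := by
    have hid : t * ((1 + t) * x ^ 2 + (1 + 1 / t) * y ^ 2 - (x + y) ^ 2) = (t * x - y) ^ 2 := by
      field_simp; ring
    have hq : 0 ≤ t * ((1 + t) * x ^ 2 + (1 + 1 / t) * y ^ 2 - (x + y) ^ 2) := by
      rw [hid]; exact sq_nonneg _
    have := (mul_nonneg_iff_of_pos_left ht0).mp hq
    linarith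
  have step1 : κ * (lam * (x + y) ^ 2) ≤ κ * (lam * ((1 + t) * x ^ 2 + (1 + 1 / t) * y ^ 2)) := by
    apply mul_le_mul_of_nonneg_left _ hκ0
    exact mul_le_mul_of_nonneg_left hcs hlam
  refine step1.trans ?_
  have e1 : κ * (lam * ((1 + t) * x ^ 2 + (1 + 1 / t) * y ^ 2)) =
      (κ * (1 + t) * lam) * x ^ 2 + (κ * (1 + 1 / t)) * (lam * y ^ 2) := by ring
  rw [e1, h2]
  have hb : κ * (1 + t) * lam ≤ mu := by
    have h3 : κ * (1 + t) * lam ≤ κ * (1 + t) * (Real.exp v * mu) := by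
      apply mul_le_mul_of_nonneg_left hle
      have : 0 ≤ 1 + t := by positivity
      positivity
    calc κ * (1 + t) * lam ≤ κ * (1 + t) * (Real.exp v * mu) := h3
      _ = (κ * (1 + t) * Real.exp v) * mu := by ring
      _ = mu := by rw [h1, one_mul]
  have := mul_le_mul_of_nonneg_right hb (sq_nonneg x)
  linarith

lemma trace_mul_single (N : Matrix ι ι ℂ) (i : ι) :
    (N * Matrix.single i i (1:ℂ)).trace = N i i := by
  rw [Matrix.trace]
  rw [Finset.sum_eq_single i]
  · simp [Matrix.diag]
  · intro b _ hb
    simp [Matrix.diag, hb]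
  · simp

lemma entry_single_mid (N M : Matrix ι ι ℂ) (i a b : ι) :
    (N * Matrix.single i i (1:ℂ) * M) a b = N a i * M i b := by
  rw [Matrix.mul_assoc, Matrix.mul_apply]
  rw [Finset.sum_eq_single i]
  · simp
  · intro c _ hc
    simp [hc]
  · simp

lemma eigProj_eq {A : Matrix ι ι ℂ} (hA : A.IsHermitian) (i : ι) :
    eigProj hA i = (hA.eigenvectorUnitary : Matrix ι ι ℂ) * Matrix.single i i (1:ℂ) *
      star (hA.eigenvectorUnitary : Matrix ι ι ℂ) := by
  ext a b
  rw [entry_single_mid]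
  simp [eigProj, Matrix.star_eq_conjTranspose, Matrix.conjTranspose_apply]

lemma diag_single_diag (d : ι → ℂ) (i : ι) :
    Matrix.diagonal d * Matrix.single i i (1:ℂ) * Matrix.diagonal d =
      Matrix.single i i (d i * d i) := by
  ext a b
  rw [Matrix.mul_diagonal, Matrix.diagonal_mul]
  by_cases hai : i = a
  · subst hai
    by_cases hbi : i = b
    · subst hbi; simp
    · simp [Matrix.single_apply, hbi]
  · simp [Matrix.single_apply, hai]

lemma trace_eig {A : Matrix ι ι ℂ} (hA : A.IsHermitian) (M : Matrix ι ι ℂ) :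
    ((A * M).trace) = ∑ j, ((hA.eigenvalues j : ℝ) : ℂ) *
      ((star (hA.eigenvectorUnitary : Matrix ι ι ℂ) * M *
        (hA.eigenvectorUnitary : Matrix ι ι ℂ)) j j) := by
  set U : Matrix ι ι ℂ := (hA.eigenvectorUnitary : Matrix ι ι ℂ) with hU
  set D : Matrix ι ι ℂ := Matrix.diagonal (RCLike.ofReal ∘ hA.eigenvalues) with hD
  have h1 : A * M = U * (D * (star U * M)) := by
    conv_lhs => rw [hA.spectral_theorem, Unitary.conjStarAlgAut_apply]
    simp only [Matrix.mul_assoc, hU, hD, Unitary.coe_star]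
  rw [h1, Matrix.trace_mul_comm, Matrix.trace]
  have h2 : D * (star U * M) * U = D * (star U * M * U) := by
    simp only [Matrix.mul_assoc]
  rw [h2]
  apply Finset.sum_congr rfl
  intro j _
  rw [Matrix.diag]
  rw [hD, Matrix.diagonal_mul]
  simp

lemma col_normSq (N : Matrix ι ι ℂ) (j : ι) :
    ∑ i, Complex.normSq (N i j) = ((star N * N) j j).re := by
  rw [Matrix.star_eq_conjTranspose, Matrix.mul_apply]
  rw [Complex.re_sum]
  apply Finset.sum_congr rfl
  intro i _
  rw [Matrix.conjTranspose_apply, Complex.star_def]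
  rw [← Complex.normSq_eq_conj_mul_self]
  simp

lemma row_normSq (N : Matrix ι ι ℂ) (i : ι) :
    ∑ j, Complex.normSq (N i j) = ((N * star N) i i).re := by
  rw [Matrix.star_eq_conjTranspose, Matrix.mul_apply]
  rw [Complex.re_sum]
  apply Finset.sum_congr rfl
  intro j _
  rw [Matrix.conjTranspose_apply, Complex.star_def]
  rw [mul_comm, ← Complex.normSq_eq_conj_mul_self]
  simp

lemma diag_re_nonneg {M : Matrix ι ι ℂ} (hM : M.PosSemidef) (j : ι) : 0 ≤ (M j j).re := by
  have h := hM.re_dotProduct_nonneg (Pi.single j 1)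
  simpa [dotProduct, Matrix.mulVec, Pi.single_apply, Finset.sum_ite_eq,
    Finset.mul_sum, Finset.sum_ite_eq'] using h

/-- `M - M*M` is PSD when `0 ≤ M ≤ 1`. -/
lemma sub_sq_psd {M : Matrix ι ι ℂ} (h1 : M.PosSemidef) (h2 : ((1:Matrix ι ι ℂ) - M).PosSemidef) :
    (M - M * M).PosSemidef := by
  obtain ⟨S, hSps, hSmul⟩ : ∃ S : Matrix ι ι ℂ, S.PosSemidef ∧ S * S = M :=
    by open scoped MatrixOrder in exact ⟨CFC.sqrt M, (CFC.sqrt_nonneg M).posSemidef, CFC.sqrt_mul_sqrt_self M h1.nonneg⟩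
  have hcalc : M - M * M = S * ((1:Matrix ι ι ℂ) - M) * S := by
    rw [← hSmul]; noncomm_ring
  have hpsd := h2.mul_mul_conjTranspose_same S
  rw [hSps.1] at hpsd
  rw [hcalc]
  exact hpsd

end AuxJOPS


open Classical in
lemma testBound {ι : Type*} [Fintype ι] [DecidableEq ι] (ρ σ T : Matrix ι ι ℂ)
    (hρ : IsFaithfulState ρ) (hσ : IsFaithfulState σ) (θ v : ℝ) (hT : IsTest T) :
    Real.exp (-θ) / (1 + Real.exp (v - θ)) * specMassSet ρ σ (Set.Ici (-v)) ≤
      ((σ * (1 - T)).trace).re + Real.exp (-θ) * ((ρ * T).trace).re := by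
  obtain ⟨hρP, hρtr⟩ := hρ
  obtain ⟨hσP, hσtr⟩ := hσ
  have h : ρ.IsHermitian ∧ σ.IsHermitian := ⟨hρP.1, hσP.1⟩
  set U : Matrix ι ι ℂ := (h.1.eigenvectorUnitary : Matrix ι ι ℂ) with hUdef
  set W : Matrix ι ι ℂ := (h.2.eigenvectorUnitary : Matrix ι ι ℂ) with hWdef
  have hUs : star U * U = 1 := Matrix.mem_unitaryGroup_iff'.mp h.1.eigenvectorUnitary.2
  have hUss : U * star U = 1 := Matrix.mem_unitaryGroup_iff.mp h.1.eigenvectorUnitary.2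
  have hWss : W * star W = 1 := Matrix.mem_unitaryGroup_iff.mp h.2.eigenvectorUnitary.2
  set Ds : Matrix ι ι ℂ := Matrix.diagonal (fun k => ((Real.sqrt (h.1.eigenvalues k) : ℝ) : ℂ))
    with hDs
  have hsq : matSqrt ρ = U * Ds * star U := by
    rw [matSqrt, matFun, dif_pos h.1]
  set G : Matrix ι ι ℂ := star U * W with hGdef
  set M₁ : Matrix ι ι ℂ := 1 - T with hM₁
  set AA : Matrix ι ι ℂ := star U * M₁ * W with hAAdef
  set BB : Matrix ι ι ℂ := star U * T * W with hBBdef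
  have hABG : AA + BB = G := by
    rw [hAAdef, hBBdef, hGdef, hM₁]
    rw [Matrix.mul_assoc, Matrix.mul_assoc, ← Matrix.mul_add, ← Matrix.add_mul]
    rw [sub_add_cancel, Matrix.one_mul]
  have hM₁herm : star M₁ = M₁ := by
    rw [Matrix.star_eq_conjTranspose]; exact hT.2.1
  have hTherm : star T = T := by
    rw [Matrix.star_eq_conjTranspose]; exact hT.1.1
  -- the key trace identity
  have key : ∀ i j : ι, ((eigProj h.2 j * matSqrt ρ * eigProj h.1 i * matSqrt ρ).trace).re
      = h.1.eigenvalues i * Complex.normSq (G i j) := by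
    intro i j
    have hmid : matSqrt ρ * eigProj h.1 i * matSqrt ρ
        = U * Matrix.single i i ((h.1.eigenvalues i : ℝ) : ℂ) * star U := by
      rw [eigProj_eq h.1 i, hsq]
      have c1 : ∀ X : Matrix ι ι ℂ, X * star U * U = X := fun X => by
        rw [Matrix.mul_assoc, hUs, Matrix.mul_one]
      have e0 : U * Ds * star U * (U * Matrix.single i i (1:ℂ) * star U) *
          (U * Ds * star U) = U * (Ds * Matrix.single i i (1:ℂ) * Ds) * star U := by
        have e1 : U * Ds * star U * (U * Matrix.single i i (1:ℂ) * star U) *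
            (U * Ds * star U)
            = U * Ds * star U * U * Matrix.single i i (1:ℂ) * star U * U * Ds *
              star U := by
          simp only [Matrix.mul_assoc]
        rw [e1]
        rw [c1 (U * Ds)]
        rw [c1 (U * Ds * Matrix.single i i (1:ℂ))]
        simp only [Matrix.mul_assoc]
      rw [e0, hDs, diag_single_diag]
      rw [← Complex.ofReal_mul, Real.mul_self_sqrt (hρP.posSemidef.eigenvalues_nonneg i)]
    have hfull : eigProj h.2 j * matSqrt ρ * eigProj h.1 i * matSqrt ρ
        = W * Matrix.single j j (1:ℂ) * star W *
            (U * Matrix.single i i ((h.1.eigenvalues i : ℝ) : ℂ) * star U) := by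
      rw [eigProj_eq h.2 j, ← hmid]
      simp only [Matrix.mul_assoc]
      rfl
    rw [hfull]
    have e2 : W * Matrix.single j j (1:ℂ) * star W *
        (U * Matrix.single i i ((h.1.eigenvalues i : ℝ) : ℂ) * star U)
        = (W * Matrix.single j j (1:ℂ) * (star W * U) *
            Matrix.single i i ((h.1.eigenvalues i : ℝ) : ℂ)) * star U := by
      simp only [Matrix.mul_assoc]
    rw [e2, Matrix.trace_mul_comm]
    have e3 : star U * (W * Matrix.single j j (1:ℂ) * (star W * U) *
        Matrix.single i i ((h.1.eigenvalues i : ℝ) : ℂ))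
        = (G * Matrix.single j j (1:ℂ) * (star W * U)) *
            Matrix.single i i ((h.1.eigenvalues i : ℝ) : ℂ) := by
      rw [hGdef]; simp only [Matrix.mul_assoc]
    rw [e3]
    have hsmul : Matrix.single i i ((h.1.eigenvalues i : ℝ) : ℂ)
        = ((h.1.eigenvalues i : ℝ) : ℂ) • Matrix.single i i (1:ℂ) := by
      rw [Matrix.smul_single, smul_eq_mul, mul_one]
    rw [hsmul, Matrix.mul_smul, Matrix.trace_smul, trace_mul_single, entry_single_mid]
    have hstarG : (star W * U) j i = star (G i j) := by
      have : star G = star W * U := by rw [hGdef, Matrix.star_mul, star_star]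
      rw [← this, Matrix.star_apply]
    rw [hstarG]
    rw [smul_eq_mul, Complex.star_def, Complex.mul_conj]
    rw [← Complex.ofReal_mul, Complex.ofReal_re]
  -- rewrite the spectral mass
  rw [specMassSet, dif_pos h]
  simp only [key]
  -- eigenvalue bounds
  have hlam_nn : ∀ i, 0 ≤ h.1.eigenvalues i := fun i => (hρP.eigenvalues_pos i).le
  have hmu_nn : ∀ j, 0 ≤ h.2.eigenvalues j := fun j => (hσP.eigenvalues_pos j).le
  -- pointwise bound
  have step1 : ∀ i j : ι,
      Real.exp (-θ) / (1 + Real.exp (v - θ)) *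
        (if Real.log (h.2.eigenvalues j) - Real.log (h.1.eigenvalues i) ∈ Set.Ici (-v) then
          h.1.eigenvalues i * Complex.normSq (G i j) else 0)
      ≤ h.2.eigenvalues j * Complex.normSq (AA i j) +
          Real.exp (-θ) * (h.1.eigenvalues i * Complex.normSq (BB i j)) := by
    intro i j
    by_cases hc : Real.log (h.2.eigenvalues j) - Real.log (h.1.eigenvalues i) ∈ Set.Ici (-v)
    · rw [if_pos hc]
      have hv : -v ≤ Real.log (h.2.eigenvalues j) - Real.log (h.1.eigenvalues i) :=
        Set.mem_Ici.mp hc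
      have hle : h.1.eigenvalues i ≤ Real.exp v * h.2.eigenvalues j := by
        calc h.1.eigenvalues i = Real.exp (Real.log (h.1.eigenvalues i)) :=
              (Real.exp_log (hρP.eigenvalues_pos i)).symm
          _ ≤ Real.exp (v + Real.log (h.2.eigenvalues j)) :=
              Real.exp_le_exp.mpr (by linarith)
          _ = Real.exp v * h.2.eigenvalues j := by
              rw [Real.exp_add, Real.exp_log (hσP.eigenvalues_pos j)]
      have hGij : G i j = AA i j + BB i j := by rw [← hABG, Matrix.add_apply]
      have hG : Complex.normSq (G i j) ≤
          (‖AA i j‖ + ‖BB i j‖) ^ 2 := by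
        rw [hGij, ← Complex.sq_norm]
        apply pow_le_pow_left₀ (norm_nonneg _)
        exact norm_add_le _ _
      have hsk := scalar_key θ v (h.1.eigenvalues i) (h.2.eigenvalues j)
        (‖AA i j‖) (‖BB i j‖) (norm_nonneg _)
        (norm_nonneg _) (hlam_nn i) (hmu_nn j) hle
      have hmono : Real.exp (-θ) / (1 + Real.exp (v - θ)) *
          (h.1.eigenvalues i * Complex.normSq (G i j))
          ≤ Real.exp (-θ) / (1 + Real.exp (v - θ)) *
            (h.1.eigenvalues i * (‖AA i j‖ + ‖BB i j‖) ^ 2) := by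
        apply mul_le_mul_of_nonneg_left _ (by positivity)
        exact mul_le_mul_of_nonneg_left hG (hlam_nn i)
      refine hmono.trans (hsk.trans ?_)
      rw [Complex.sq_norm, Complex.sq_norm]
    · rw [if_neg hc, mul_zero]
      have h1 : 0 ≤ h.2.eigenvalues j * Complex.normSq (AA i j) :=
        mul_nonneg (hmu_nn j) (Complex.normSq_nonneg _)
      have h2 : 0 ≤ Real.exp (-θ) * (h.1.eigenvalues i * Complex.normSq (BB i j)) :=
        mul_nonneg (Real.exp_pos _).le (mul_nonneg (hlam_nn i) (Complex.normSq_nonneg _))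
      linarith
  -- sum the pointwise bound
  have step2 : Real.exp (-θ) / (1 + Real.exp (v - θ)) *
      (∑ i, ∑ j, (if Real.log (h.2.eigenvalues j) - Real.log (h.1.eigenvalues i) ∈
          Set.Ici (-v) then h.1.eigenvalues i * Complex.normSq (G i j) else 0))
      ≤ (∑ i, ∑ j, h.2.eigenvalues j * Complex.normSq (AA i j)) +
        (∑ i, ∑ j, Real.exp (-θ) * (h.1.eigenvalues i * Complex.normSq (BB i j))) := by
    rw [Finset.mul_sum, ← Finset.sum_add_distrib]
    apply Finset.sum_le_sum
    intro i _
    rw [Finset.mul_sum, ← Finset.sum_add_distrib]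
    apply Finset.sum_le_sum
    intro j _
    exact step1 i j
  refine step2.trans ?_
  -- identify the two sums with the traces
  have cancelU : ∀ X : Matrix ι ι ℂ, U * (star U * X) = X := fun X => by
    rw [← Matrix.mul_assoc, hUss, Matrix.one_mul]
  have cancelW : ∀ X : Matrix ι ι ℂ, W * (star W * X) = X := fun X => by
    rw [← Matrix.mul_assoc, hWss, Matrix.one_mul]
  have hAAstar : star AA * AA = star W * (M₁ * M₁) * W := by
    have hstar : star AA = star W * M₁ * U := by
      rw [hAAdef, Matrix.star_mul, Matrix.star_mul, star_star, hM₁herm, Matrix.mul_assoc]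
    rw [hstar, hAAdef]
    simp only [Matrix.mul_assoc]
    rw [cancelU]
  have hBBstar : BB * star BB = star U * (T * T) * U := by
    have hstar : star BB = star W * T * U := by
      rw [hBBdef, Matrix.star_mul, Matrix.star_mul, star_star, hTherm, Matrix.mul_assoc]
    rw [hstar, hBBdef]
    simp only [Matrix.mul_assoc]
    rw [cancelW]
  -- psd facts
  have hM₁ps : M₁.PosSemidef := hT.2
  have hTps : T.PosSemidef := hT.1
  have hM₁sub : (M₁ - M₁ * M₁).PosSemidef := by
    apply sub_sq_psd hM₁ps
    rw [hM₁, sub_sub_cancel]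
    exact hT.1
  have hTsub : (T - T * T).PosSemidef := by
    apply sub_sq_psd hTps
    exact hT.2
  have hdiagW : ∀ j, ((star W * (M₁ * M₁) * W) j j).re ≤ ((star W * M₁ * W) j j).re := by
    intro j
    have hps := hM₁sub.conjTranspose_mul_mul_same W
    rw [← Matrix.star_eq_conjTranspose] at hps
    have hnn := diag_re_nonneg hps j
    have hexp : star W * (M₁ - M₁ * M₁) * W = star W * M₁ * W - star W * (M₁ * M₁) * W := by
      noncomm_ring
    rw [hexp, Matrix.sub_apply, Complex.sub_re] at hnn
    linarith
  have hdiagU : ∀ i, ((star U * (T * T) * U) i i).re ≤ ((star U * T * U) i i).re := by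
    intro i
    have hps := hTsub.conjTranspose_mul_mul_same U
    rw [← Matrix.star_eq_conjTranspose] at hps
    have hnn := diag_re_nonneg hps i
    have hexp : star U * (T - T * T) * U = star U * T * U - star U * (T * T) * U := by
      noncomm_ring
    rw [hexp, Matrix.sub_apply, Complex.sub_re] at hnn
    linarith
  -- trace identities
  have htrσ : ((σ * M₁).trace).re = ∑ j, h.2.eigenvalues j * ((star W * M₁ * W) j j).re := by
    rw [trace_eig h.2 M₁, Complex.re_sum]
    exact Finset.sum_congr rfl fun j _ => Complex.re_ofReal_mul _ _
  have htrρ : ((ρ * T).trace).re = ∑ i, h.1.eigenvalues i * ((star U * T * U) i i).re := by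
    rw [trace_eig h.1 T, Complex.re_sum]
    exact Finset.sum_congr rfl fun i _ => Complex.re_ofReal_mul _ _
  have partA : (∑ i, ∑ j, h.2.eigenvalues j * Complex.normSq (AA i j))
      ≤ ((σ * M₁).trace).re := by
    rw [Finset.sum_comm, htrσ]
    apply Finset.sum_le_sum
    intro j _
    rw [← Finset.mul_sum, col_normSq, hAAstar]
    exact mul_le_mul_of_nonneg_left (hdiagW j) (hmu_nn j)
  have partB : (∑ i, ∑ j, Real.exp (-θ) * (h.1.eigenvalues i * Complex.normSq (BB i j)))
      ≤ Real.exp (-θ) * ((ρ * T).trace).re := by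
    rw [htrρ, Finset.mul_sum]
    apply Finset.sum_le_sum
    intro i _
    rw [← Finset.mul_sum, ← Finset.mul_sum, row_normSq, hBBstar]
    apply mul_le_mul_of_nonneg_left _ (Real.exp_pos _).le
    exact mul_le_mul_of_nonneg_left (hdiagU i) (hlam_nn i)
  linarith

/-- **Lemma 4 (Jakšić–Ogata–Pillet–Seiringer).** For faithful states `ρ`, `σ` and any
`θ, v ∈ ℝ`, `(e^{-θ}/(1+e^{v-θ})) μ_{σ|ρ}([-v, ∞)) ≤ e*_sym(σ, e^{-θ}ρ)`, the minimal total
error in symmetric hypothesis testing of `σ` against `e^{-θ}ρ`. -/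
theorem spectral_lower_bound_symmetric_error
    {ι : Type*} [Fintype ι] [DecidableEq ι] (ρ σ : Matrix ι ι ℂ)
    (hρ : IsFaithfulState ρ) (hσ : IsFaithfulState σ) (θ v : ℝ) :
    Real.exp (-θ) / (1 + Real.exp (v - θ)) * specMassSet ρ σ (Set.Ici (-v)) ≤
      sInf {e : ℝ | ∃ T : Matrix ι ι ℂ, IsTest T ∧
        e = ((σ * (1 - T)).trace).re + Real.exp (-θ) * ((ρ * T).trace).re} := by
  apply le_csInf
  · refine ⟨((σ * (1 - 0)).trace).re + Real.exp (-θ) * ((ρ * (0 : Matrix ι ι ℂ)).trace).re,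
      (0 : Matrix ι ι ℂ), ⟨Matrix.PosSemidef.zero, by simpa using Matrix.PosSemidef.one⟩, rfl⟩
  · rintro e ⟨T, hT, rfl⟩
    exact testBound ρ σ T hρ hσ θ v hT
end QHT
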